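/- Let M be a nonempty set and ξ, N, V : M → ℝ^(n+2) maps such that for every p ∈ M: η(ξ p, ξ p) = 0, η(N p, N p) = 0, η(ξ p, N p) = 1 and η(V p, V p) ≠ 0, and assume there is ε ∈ {-1, 1} with ε * η(V p, V p) > 0 for all p ∈ M. Write |V p| := √(ε * η(V p, V p)) and V*(p) := V p - η(V p, N p) • ξ p - η(V p, ξ p) • N p. Then: (A) the function p ↦ η(V p, ξ p) * η(V p, N p) / |V p|^2 is constant on M if and only if the function p ↦ η(V* p, V* p) / |V p|^2 is constant on M; (B) if in addition η(V p, ξ p) * η(V p, N p) ≠ 0 for every p ∈ M, then these conditions are further equivalent to: there exists f : M → ℝ with f p ≠ 0 for all p such that both angle functions p ↦ η(V p, f p • ξ p)/|V p| and p ↦ η(V p, (f p)⁻¹ • N p)/|V p| are constant on M (i.e., the null hypersurface has constant angle with respect to V in some gauge of the null frame). -/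

import Mathlib

open scoped BigOperators

noncomputable section

/-- Euclidean space `ℝ^m`. -/
abbrev E (m : ℕ) : Type := EuclideanSpace ℝ (Fin m)

/-- The Minkowski bilinear form `η(x,y) = -(x 0)(y 0) + ∑_{i≥1} (x i)(y i)` on `ℝ^(n+2)`. -/
def eta {n : ℕ} (x y : E (n + 2)) : ℝ :=
  (∑ i, x i * y i) - 2 * (x 0 * y 0)

/-- Screen projection `P_p(w) = w - η(w,N)ξ - η(w,ξ)N` determined by the null frame at a point. -/
def sproj {n : ℕ} (xi N w : E (n + 2)) : E (n + 2) :=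
  w - eta w N • xi - eta w xi • N

/-- Screen shape operator `A*_ξ(p)(v) = -P_p(D_v ξ (p))`. -/
def Astar {n : ℕ} (xi N : E (n + 2) → E (n + 2)) (p v : E (n + 2)) : E (n + 2) :=
  -sproj (xi p) (N p) (fderiv ℝ xi p v)

/-- Shape operator `A_N(p)(v) = -P_p(D_v N (p))`. -/
def AN {n : ℕ} (xi N : E (n + 2) → E (n + 2)) (p v : E (n + 2)) : E (n + 2) :=
  -sproj (xi p) (N p) (fderiv ℝ N p v)

/-- Transversal one-form `τ_p(v) = η(D_v N(p), ξ p)`. -/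
def tau {n : ℕ} (xi N : E (n + 2) → E (n + 2)) (p v : E (n + 2)) : ℝ :=
  eta (fderiv ℝ N p v) (xi p)

/-- Screen part `Z*(p) = P_p(Z p)` of a vector field. -/
def Zstar {n : ℕ} (xi N Z : E (n + 2) → E (n + 2)) (p : E (n + 2)) : E (n + 2) :=
  sproj (xi p) (N p) (Z p)

/-- `A_{Z⊥}(p)(v) = η(Z p, N p) • A*_ξ(p)(v) + η(Z p, ξ p) • A_N(p)(v)`. -/
def AZperp {n : ℕ} (xi N Z : E (n + 2) → E (n + 2)) (p v : E (n + 2)) : E (n + 2) :=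
  eta (Z p) (N p) • Astar xi N p v + eta (Z p) (xi p) • AN xi N p v


lemma eta_comm {n : ℕ} (x y : E (n + 2)) : eta x y = eta y x := by
  simp [eta, mul_comm]

lemma eta_sub_left {n : ℕ} (x y z : E (n + 2)) : eta (x - y) z = eta x z - eta y z := by
  simp [eta, PiLp.sub_apply, sub_mul, Finset.sum_sub_distrib]; ring

lemma eta_sub_right {n : ℕ} (x y z : E (n + 2)) : eta x (y - z) = eta x y - eta x z := by
  rw [eta_comm, eta_sub_left, eta_comm x y, eta_comm x z]

lemma eta_smul_left {n : ℕ} (c : ℝ) (x y : E (n + 2)) : eta (c • x) y = c * eta x y := by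
  simp [eta, PiLp.smul_apply, smul_eq_mul, mul_assoc, ← Finset.mul_sum]; ring

lemma eta_smul_right {n : ℕ} (c : ℝ) (x y : E (n + 2)) : eta x (c • y) = c * eta x y := by
  rw [eta_comm, eta_smul_left, eta_comm]

lemma sproj_norm {n : ℕ} (xi N V : E (n + 2)) (hξξ : eta xi xi = 0) (hNN : eta N N = 0)
    (hξN : eta xi N = 1) :
    eta (sproj xi N V) (sproj xi N V) = eta V V - 2 * (eta V xi * eta V N) := by
  simp only [sproj, eta_sub_left, eta_sub_right, eta_smul_left, eta_smul_right]
  rw [eta_comm xi V, eta_comm N V, eta_comm N xi, hξξ, hNN, hξN]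
  ring

lemma gauge_prod (c a b s : ℝ) (hc : c ≠ 0) (hs : s ≠ 0) :
    (c * a / s) * (c⁻¹ * b / s) = a * b / s ^ 2 := by
  field_simp

/-- Characterizations of the constant angle condition for a null hypersurface
with respect to a nowhere null field: constancy of the product of the angle functions is
equivalent to constancy of `η(V*,V*)/|V|²`, and (when both null components never vanish) to
the existence of a gauge of the null frame making both angle functions constant. -/
theorem constant_angle_characterizations {n : ℕ} (M : Type*) [Nonempty M]
    (ξ N V : M → E (n + 2)) (ε : ℝ)
    (hξξ : ∀ p, eta (ξ p) (ξ p) = 0)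
    (hNN : ∀ p, eta (N p) (N p) = 0)
    (hξN : ∀ p, eta (ξ p) (N p) = 1)
    (hV0 : ∀ p, eta (V p) (V p) ≠ 0)
    (hε : ε = -1 ∨ ε = 1)
    (hεV : ∀ p, 0 < ε * eta (V p) (V p)) :
    ((∀ p q : M,
        eta (V p) (ξ p) * eta (V p) (N p) / (Real.sqrt (ε * eta (V p) (V p))) ^ 2 =
        eta (V q) (ξ q) * eta (V q) (N q) / (Real.sqrt (ε * eta (V q) (V q))) ^ 2) ↔
      (∀ p q : M,
        eta (sproj (ξ p) (N p) (V p)) (sproj (ξ p) (N p) (V p))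
            / (Real.sqrt (ε * eta (V p) (V p))) ^ 2 =
        eta (sproj (ξ q) (N q) (V q)) (sproj (ξ q) (N q) (V q))
            / (Real.sqrt (ε * eta (V q) (V q))) ^ 2)) ∧
    ((∀ p, eta (V p) (ξ p) * eta (V p) (N p) ≠ 0) →
      ((∀ p q : M,
          eta (V p) (ξ p) * eta (V p) (N p) / (Real.sqrt (ε * eta (V p) (V p))) ^ 2 =
          eta (V q) (ξ q) * eta (V q) (N q) / (Real.sqrt (ε * eta (V q) (V q))) ^ 2) ↔
        ∃ f : M → ℝ, (∀ p, f p ≠ 0) ∧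
          (∀ p q : M,
            eta (V p) (f p • ξ p) / Real.sqrt (ε * eta (V p) (V p)) =
            eta (V q) (f q • ξ q) / Real.sqrt (ε * eta (V q) (V q))) ∧
          (∀ p q : M,
            eta (V p) ((f p)⁻¹ • N p) / Real.sqrt (ε * eta (V p) (V p)) =
            eta (V q) ((f q)⁻¹ • N q) / Real.sqrt (ε * eta (V q) (V q))))) := by
  have hs : ∀ p : M, (Real.sqrt (ε * eta (V p) (V p))) ^ 2 = ε * eta (V p) (V p) := fun p =>
    Real.sq_sqrt (hεV p).le
  have hspos : ∀ p : M, 0 < Real.sqrt (ε * eta (V p) (V p)) := fun p =>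
    Real.sqrt_pos.2 (hεV p)
  have hεε : ε * ε = 1 := by rcases hε with h | h <;> simp [h]
  have hVVs : ∀ p : M, eta (V p) (V p) / (Real.sqrt (ε * eta (V p) (V p))) ^ 2 = ε := by
    intro p
    rw [hs p, div_eq_iff (hεV p).ne']
    linear_combination (- eta (V p) (V p)) * hεε
  have key : ∀ p : M,
      eta (sproj (ξ p) (N p) (V p)) (sproj (ξ p) (N p) (V p))
          / (Real.sqrt (ε * eta (V p) (V p))) ^ 2 =
      ε - 2 * (eta (V p) (ξ p) * eta (V p) (N p) / (Real.sqrt (ε * eta (V p) (V p))) ^ 2) := by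
    intro p
    rw [sproj_norm _ _ _ (hξξ p) (hNN p) (hξN p), sub_div, hVVs p, mul_div_assoc]
  constructor
  · constructor
    · intro h p q
      rw [key p, key q, h p q]
    · intro h p q
      have := h p q
      rw [key p, key q] at this
      linarith
  · intro hne
    have hVξ : ∀ p, eta (V p) (ξ p) ≠ 0 := fun p h0 => hne p (by rw [h0]; ring)
    constructor
    · intro h
      refine ⟨fun p => Real.sqrt (ε * eta (V p) (V p)) / eta (V p) (ξ p), ?_, ?_, ?_⟩
      · intro p
        exact div_ne_zero (hspos p).ne' (hVξ p)
      · intro p q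
        rw [eta_smul_right, eta_smul_right, div_mul_cancel₀ _ (hVξ p),
          div_mul_cancel₀ _ (hVξ q), div_self (hspos p).ne', div_self (hspos q).ne']
      · intro p q
        rw [eta_smul_right, eta_smul_right, inv_div, inv_div,
          div_mul_eq_mul_div, div_mul_eq_mul_div, div_div, div_div, ← sq, ← sq]
        exact h p q
    · rintro ⟨f, hf, h1, h2⟩ p q
      have e1 := h1 p q
      have e2 := h2 p q
      rw [eta_smul_right, eta_smul_right] at e1 e2
      calc eta (V p) (ξ p) * eta (V p) (N p) / (Real.sqrt (ε * eta (V p) (V p))) ^ 2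
          = (f p * eta (V p) (ξ p) / Real.sqrt (ε * eta (V p) (V p))) *
            ((f p)⁻¹ * eta (V p) (N p) / Real.sqrt (ε * eta (V p) (V p))) :=
            (gauge_prod _ _ _ _ (hf p) (hspos p).ne').symm
        _ = (f q * eta (V q) (ξ q) / Real.sqrt (ε * eta (V q) (V q))) *
            ((f q)⁻¹ * eta (V q) (N q) / Real.sqrt (ε * eta (V q) (V q))) := by rw [e1, e2]
        _ = eta (V q) (ξ q) * eta (V q) (N q) / (Real.sqrt (ε * eta (V q) (V q))) ^ 2 :=
            gauge_prod _ _ _ _ (hf q) (hspos q).ne'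


end
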